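/- Let h = (1,2) and v = (1,2) be permutations of {1,2} arising from the square torus representative (top row 0,1; bottom row 1,0); combining a 1,1-square-tiled surface (h₁,v₁) on n letters (single cycles with v₁⁻¹(1)=2) with the torus by cylinder concatenation yields a pair (h,v) of single (n+1)-cycles whose commutator has the same nontrivial cycle type as [h₁,v₁], together with one additional fixed point (a marked point of order 0). -/

import Mathlib

open Equiv Equiv.Perm

/-- Joining two disjoint cycles by a transposition connecting their supports
yields a single cycle on the union of the supports. -/
lemma join_cycle {α : Type*} [Fintype α] [DecidableEq α] {σ τ : Equiv.Perm α}
    (hσ : σ.IsCycle) (hτ : τ.IsCycle) (hd : Disjoint σ.support τ.support)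
    {x y : α} (hx : x ∈ σ.support) (hy : y ∈ τ.support) :
    (Equiv.swap x y * σ * τ).IsCycle ∧
      (Equiv.swap x y * σ * τ).support = σ.support ∪ τ.support := by
  set f := Equiv.swap x y * σ * τ with hfdef
  have hτσ : ∀ b ∈ σ.support, τ b = b := fun b hb =>
    notMem_support.1 (Finset.disjoint_left.1 hd hb)
  have hστ : ∀ b ∈ τ.support, σ b = b := fun b hb =>
    notMem_support.1 (Finset.disjoint_right.1 hd hb)
  have hxy : x ≠ y := fun h => Finset.disjoint_left.1 hd hx (h ▸ hy)
  have hfap : ∀ b, f b = Equiv.swap x y (σ (τ b)) := fun b => by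
    simp [hfdef, Equiv.Perm.mul_apply]
  have hfσ : ∀ b ∈ σ.support, f b = Equiv.swap x y (σ b) := fun b hb => by
    rw [hfap, hτσ b hb]
  have hfτ : ∀ b ∈ τ.support, f b = Equiv.swap x y (τ b) := fun b hb => by
    rw [hfap, hστ (τ b) (apply_mem_support.2 hb)]
  -- support computation
  have hsupp : f.support = σ.support ∪ τ.support := by
    ext b
    simp only [Finset.mem_union, mem_support]
    constructor
    · intro hb
      by_contra hcon
      push_neg at hcon
      obtain ⟨h1, h2⟩ := hcon
      have hbx : b ≠ x := fun h => (mem_support.1 hx) (h ▸ h1)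
      have hby : b ≠ y := fun h => (mem_support.1 hy) (h ▸ h2)
      exact hb (by rw [hfap, h2, h1, swap_apply_of_ne_of_ne hbx hby])
    · intro hb
      rcases hb with hb | hb
      · rw [hfσ b (mem_support.2 hb)]
        have hσby : σ b ≠ y := fun h =>
          Finset.disjoint_left.1 hd (apply_mem_support.2 (mem_support.2 hb)) (h ▸ hy)
        by_cases hσbx : σ b = x
        · rw [hσbx, swap_apply_left]
          exact fun h => Finset.disjoint_left.1 hd (mem_support.2 hb) (h ▸ hy)
        · rw [swap_apply_of_ne_of_ne hσbx hσby]
          exact hb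
      · rw [hfτ b (mem_support.2 hb)]
        have hτbx : τ b ≠ x := fun h =>
          Finset.disjoint_right.1 hd (apply_mem_support.2 (mem_support.2 hb)) (h ▸ hx)
        by_cases hτby : τ b = y
        · rw [hτby, swap_apply_right]
          exact fun h => Finset.disjoint_right.1 hd (mem_support.2 hb) (h ▸ hx)
        · rw [swap_apply_of_ne_of_ne hτbx hτby]
          exact hb
  -- points of σ.support lie in the f-cycle of x
  have keyσpow : ∀ k : ℕ, f.SameCycle x ((σ ^ k) x) := by
    intro k
    induction k with
    | zero => exact ⟨0, by simp⟩
    | succ k ih =>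
      have hb : (σ ^ k) x ∈ σ.support := pow_apply_mem_support.2 hx
      rw [pow_succ', Equiv.Perm.mul_apply]
      by_cases hbx : σ ((σ ^ k) x) = x
      · rw [hbx]
      · have hσby : σ ((σ ^ k) x) ≠ y := fun h =>
          Finset.disjoint_left.1 hd (apply_mem_support.2 hb) (h ▸ hy)
        have hstep : f ((σ ^ k) x) = σ ((σ ^ k) x) := by
          rw [hfσ _ hb, swap_apply_of_ne_of_ne hbx hσby]
        exact ih.trans ⟨1, by simpa using hstep⟩
  have keyσ : ∀ b ∈ σ.support, f.SameCycle x b := fun b hb => by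
    obtain ⟨k, hk⟩ := hσ.exists_pow_eq (mem_support.1 hx) (mem_support.1 hb)
    exact hk ▸ keyσpow k
  have keyτpow : ∀ k : ℕ, f.SameCycle y ((τ ^ k) y) := by
    intro k
    induction k with
    | zero => exact ⟨0, by simp⟩
    | succ k ih =>
      have hb : (τ ^ k) y ∈ τ.support := pow_apply_mem_support.2 hy
      rw [pow_succ', Equiv.Perm.mul_apply]
      by_cases hby : τ ((τ ^ k) y) = y
      · rw [hby]
      · have hτbx : τ ((τ ^ k) y) ≠ x := fun h =>
          Finset.disjoint_right.1 hd (apply_mem_support.2 hb) (h ▸ hx)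
        have hstep : f ((τ ^ k) y) = τ ((τ ^ k) y) := by
          rw [hfτ _ hb, swap_apply_of_ne_of_ne hτbx hby]
        exact ih.trans ⟨1, by simpa using hstep⟩
  have keyτ : ∀ b ∈ τ.support, f.SameCycle y b := fun b hb => by
    obtain ⟨k, hk⟩ := hτ.exists_pow_eq (mem_support.1 hy) (mem_support.1 hb)
    exact hk ▸ keyτpow k
  have hxyc : f.SameCycle x y := by
    have hb0 : σ⁻¹ x ∈ σ.support := by
      rw [← support_inv]
      exact apply_mem_support.2 (by rw [support_inv]; exact hx)
    have hstep : f (σ⁻¹ x) = y := by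
      rw [hfσ _ hb0, ← Equiv.Perm.mul_apply σ, mul_inv_cancel, Equiv.Perm.one_apply, swap_apply_left]
    exact (keyσ _ hb0).trans ⟨1, by simpa using hstep⟩
  constructor
  · refine ⟨x, ?_, ?_⟩
    · exact mem_support.1 (hsupp ▸ Finset.mem_union_left _ hx)
    · intro b hb
      have hb' : b ∈ σ.support ∪ τ.support := hsupp ▸ mem_support.2 hb
      rcases Finset.mem_union.1 hb' with hb' | hb'
      · exact keyσ b hb'
      · exact hxyc.trans (keyτ b hb')
  · exact hsupp

theorem stmt_19 {α : Type*} [Fintype α] [DecidableEq α]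
    (h₁ v₁ : Equiv.Perm α) (A : Finset α) (a₁ a₂ b₁ b₂ : α)
    (hh₁ : h₁.IsCycle) (hh₁s : h₁.support = A)
    (hv₁ : v₁.IsCycle) (hv₁s : v₁.support = A)
    (ha₁ : a₁ ∈ A) (ha12 : h₁ a₁ = a₂) (hane : a₁ ≠ a₂) (hv₁n : v₁⁻¹ a₁ = a₂)
    (hb₁ : b₁ ∉ A) (hb₂ : b₂ ∉ A) (hbne : b₁ ≠ b₂) :
    ∀ h v : Equiv.Perm α,
      h = Equiv.swap a₁ b₁ * h₁ * Equiv.swap b₁ b₂ →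
      v = v₁ * Equiv.swap b₁ b₂ * Equiv.swap a₁ b₁ →
      h.IsCycle ∧ h.support = A ∪ {b₁, b₂} ∧
      v.IsCycle ∧ v.support = A ∪ {b₁, b₂} ∧
      (h * v * h⁻¹ * v⁻¹).cycleType = (h₁ * v₁ * h₁⁻¹ * v₁⁻¹).cycleType ∧
      (h * v * h⁻¹ * v⁻¹) b₂ = b₂ := by
  intro h v hh hv
  subst hh hv
  set s := Equiv.swap a₁ b₁ with hsdef
  set t := Equiv.swap b₁ b₂ with htdef
  have hAB : Disjoint A ({b₁, b₂} : Finset α) := by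
    rw [Finset.disjoint_right]
    intro c hc
    rcases Finset.mem_insert.1 hc with rfl | hc
    · exact hb₁
    · rw [Finset.mem_singleton] at hc; subst hc; exact hb₂
  have htcyc : t.IsCycle := isCycle_swap hbne
  have hts : t.support = {b₁, b₂} := support_swap hbne
  have hb₁t : b₁ ∈ t.support := by rw [hts]; exact Finset.mem_insert_self _ _
  -- h is a cycle
  obtain ⟨hcyc, hsupph⟩ := join_cycle hh₁ htcyc
    (by rw [hh₁s, hts]; exact hAB) (hh₁s ▸ ha₁) hb₁t
  -- v is a conjugate of a joined cycle
  obtain ⟨gcyc, gsupp⟩ := join_cycle hv₁ htcyc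
    (by rw [hv₁s, hts]; exact hAB) (hv₁s ▸ ha₁) hb₁t
  have hveq : v₁ * t * s = s * (s * v₁ * t) * s⁻¹ := by
    simp only [hsdef, htdef, swap_inv, mul_assoc, swap_mul_self_mul]
  -- the fixed set is preserved by s
  have hmap : (A ∪ {b₁, b₂}).map (Equiv.toEmbedding s) = A ∪ {b₁, b₂} := by
    apply Finset.eq_of_subset_of_card_le
    · intro c hc
      obtain ⟨d, hd, rfl⟩ := Finset.mem_map.1 hc
      simp only [Equiv.toEmbedding_apply]
      rcases eq_or_ne d a₁ with rfl | hda
      · rw [hsdef, swap_apply_left]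
        exact Finset.mem_union_right _ (Finset.mem_insert_self _ _)
      · rcases eq_or_ne d b₁ with rfl | hdb
        · rw [hsdef, swap_apply_right]
          exact Finset.mem_union_left _ ha₁
        · rw [hsdef, swap_apply_of_ne_of_ne hda hdb]
          exact hd
    · rw [Finset.card_map]
  refine ⟨hcyc, by rw [hsupph, hh₁s, hts], ?_, ?_, ?_, ?_⟩
  · rw [hveq]; exact gcyc.conj
  · rw [hveq, support_conj, gsupp, hv₁s, hts, hmap]
  all_goals {
    -- commutator computation
    have hth : t * h₁ = h₁ * t := by
      refine (Equiv.Perm.Disjoint.commute ?_).eq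
      rw [disjoint_iff_disjoint_support, hts, hh₁s]
      exact hAB.symm
    have htv : t * v₁ = v₁ * t := by
      refine (Equiv.Perm.Disjoint.commute ?_).eq
      rw [disjoint_iff_disjoint_support, hts, hv₁s]
      exact hAB.symm
    have hfixa : (v₁ * h₁) a₁ = a₁ := by
      rw [Equiv.Perm.mul_apply, ha12, ← hv₁n, ← Equiv.Perm.mul_apply, mul_inv_cancel, Equiv.Perm.one_apply]
    have hfixb : (v₁ * h₁) b₁ = b₁ := by
      have h1 : h₁ b₁ = b₁ := notMem_support.1 (hh₁s ▸ hb₁)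
      have h2 : v₁ b₁ = b₁ := notMem_support.1 (hv₁s ▸ hb₁)
      rw [Equiv.Perm.mul_apply, h1, h2]
    have hsc : Commute s (v₁ * h₁) := by
      have := Equiv.swap_apply_apply (v₁ * h₁) a₁ b₁
      rw [hfixa, hfixb, ← hsdef] at this
      have h2 : s * (v₁ * h₁) = (v₁ * h₁) * s := by
        conv_lhs => rw [this]
        simp only [mul_assoc, inv_mul_cancel_left, mul_inv_cancel_left, inv_mul_cancel, mul_one]
      exact h2
    have hscinv : s * (v₁ * h₁)⁻¹ = (v₁ * h₁)⁻¹ * s := (hsc.inv_right).eq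
    have e1 : (s * h₁ * t) * (v₁ * t * s) = s * (h₁ * v₁) * s := by
      calc (s * h₁ * t) * (v₁ * t * s) = s * (h₁ * ((t * v₁) * (t * s))) := by
            simp only [mul_assoc]
        _ = s * (h₁ * ((v₁ * t) * (t * s))) := by rw [htv]
        _ = s * (h₁ * v₁) * s := by
            simp only [htdef, mul_assoc, swap_mul_self_mul]
    have e2 : (v₁ * t * s) * (s * h₁ * t) = v₁ * h₁ := by
      calc (v₁ * t * s) * (s * h₁ * t) = v₁ * (t * (s * (s * (h₁ * t)))) := by
            simp only [mul_assoc]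
        _ = v₁ * (t * (h₁ * t)) := by simp only [hsdef, swap_mul_self_mul]
        _ = v₁ * ((t * h₁) * t) := by rw [mul_assoc]
        _ = v₁ * ((h₁ * t) * t) := by rw [hth]
        _ = v₁ * h₁ := by
            simp only [htdef, mul_assoc, swap_mul_self, mul_one]
    have e3 : ∀ p q : Equiv.Perm α, p * q * p⁻¹ * q⁻¹ = (p * q) * (q * p)⁻¹ := by
      intro p q; group
    have hceq : (s * h₁ * t) * (v₁ * t * s) * (s * h₁ * t)⁻¹ * (v₁ * t * s)⁻¹
        = s * (h₁ * v₁ * h₁⁻¹ * v₁⁻¹) * s⁻¹ := by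
      rw [e3, e1, e2]
      calc s * (h₁ * v₁) * s * (v₁ * h₁)⁻¹
          = s * ((h₁ * v₁) * (s * (v₁ * h₁)⁻¹)) := by simp only [mul_assoc]
        _ = s * ((h₁ * v₁) * ((v₁ * h₁)⁻¹ * s)) := by rw [hscinv]
        _ = s * (h₁ * v₁ * h₁⁻¹ * v₁⁻¹) * s⁻¹ := by
            simp only [hsdef, swap_inv, mul_inv_rev, mul_assoc]
    first
    | -- cycle type goal
      (rw [hceq]; exact Equiv.Perm.cycleType_conj)
    | -- fixed point goal
      (rw [hceq]
       have hb₂a : b₂ ≠ a₁ := fun h => hb₂ (h ▸ ha₁)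
       have hsb₂ : s b₂ = b₂ := swap_apply_of_ne_of_ne hb₂a hbne.symm
       have hh2 : h₁ b₂ = b₂ := notMem_support.1 (hh₁s ▸ hb₂)
       have hv2 : v₁ b₂ = b₂ := notMem_support.1 (hv₁s ▸ hb₂)
       have hh2' : h₁⁻¹ b₂ = b₂ := by
         rw [Equiv.Perm.inv_eq_iff_eq, hh2]
       have hv2' : v₁⁻¹ b₂ = b₂ := by
         rw [Equiv.Perm.inv_eq_iff_eq, hv2]
       have hsinv : s⁻¹ b₂ = b₂ := by
         rw [hsdef, swap_inv]; exact swap_apply_of_ne_of_ne hb₂a hbne.symm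
       simp only [Equiv.Perm.mul_apply]
       rw [hsinv, hv2', hh2', hv2, hh2, hsb₂])
  }
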